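/- Let q = p^m be a power of a prime p, a ∈ F_{q²} with a^{q+1} = −1, L an n×n unitary matrix over F_{q²} with rows L₁,…,Lₙ, and λ₁,…,λₙ ∈ F_{q²}. For 1 ≤ i ≤ n let L'ᵢ = (aLᵢ, aλᵢ, λᵢ) ∈ F_{q²}^{n+2}. Suppose x ∈ F_{q²}^{n+2} is a nonzero vector satisfying x*x = 0 and L'ᵢ*x = 0 for all 1 ≤ i ≤ n. Then the code generated by the (n+1)×(2n+2) matrix G' whose i-th row (1 ≤ i ≤ n) is (eᵢ, aLᵢ, aλᵢ, λᵢ) (eᵢ the i-th standard basis vector of F_{q²}ⁿ) and whose last row is (0,…,0, x) (n zeros followed by x) is a Hermitian self-dual code of length 2n+2 and dimension n+1. -/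

import Mathlib

open Matrix BigOperators Finset

/-- The Hermitian inner product `x * y = ∑ i, x i * (y i)^q` over `F_{q²}`. -/
def hermInner (q : ℕ) {F : Type} [CommRing F] {ι : Type} [Fintype ι]
    (x y : ι → F) : F :=
  ∑ i, x i * y i ^ q

/-- The Hermitian dual of a set of vectors. -/
def hermDual (q : ℕ) {F : Type} [CommRing F] {ι : Type} [Fintype ι]
    (C : Set (ι → F)) : Set (ι → F) :=
  {y | ∀ x ∈ C, hermInner q x y = 0}

/-- The code generated by a matrix: the span of its rows. -/
def rowSpan {F : Type} [Field F] {k : ℕ} {ι : Type} (G : Matrix (Fin k) ι F) :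
    Submodule F (ι → F) :=
  Submodule.span F (Set.range fun i => G i)
/-- Proposition 8 of the paper. Given `a^{q+1} = -1`, an `n×n`
unitary matrix `L`, scalars `λ₁,…,λₙ`, the extended rows `L'ᵢ = (aLᵢ, aλᵢ, λᵢ)`,
and a nonzero `x ∈ F_{q²}^{n+2}` with `x*x = 0` and `L'ᵢ*x = 0` for all `i`,
the matrix `G'` with rows `(eᵢ, aLᵢ, aλᵢ, λᵢ)` and last row `(0,…,0, x)`
generates a Hermitian self-dual code of length `2n+2` and dimension `n+1`. -/
theorem stmt18 (p m q n : ℕ) (hp : p.Prime) (hm : 0 < m) (hq : q = p ^ m)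
    (F : Type) [Field F] [Fintype F] (hF : Fintype.card F = q ^ 2)
    (a : F) (ha : a ^ (q + 1) = -1)
    (L : Matrix (Fin n) (Fin n) F) (hL : L * (L.map (· ^ q))ᵀ = 1)
    (lam : Fin n → F)
    (L' : Fin n → (Fin n ⊕ (Unit ⊕ Unit)) → F)
    (hL' : ∀ i, L' i = Sum.elim (fun k => a * L i k)
      (Sum.elim (fun _ => a * lam i) (fun _ => lam i)))
    (x : (Fin n ⊕ (Unit ⊕ Unit)) → F) (hx0 : x ≠ 0)
    (hxx : hermInner q x x = 0)
    (hLx : ∀ i, hermInner q (L' i) x = 0)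
    (G' : Matrix (Fin (n + 1)) (Fin n ⊕ (Fin n ⊕ (Unit ⊕ Unit))) F)
    (hG1 : ∀ i j : Fin n, G' i.castSucc (Sum.inl j) = if j = i then 1 else 0)
    (hG2 : ∀ (i : Fin n) (j : Fin n ⊕ (Unit ⊕ Unit)), G' i.castSucc (Sum.inr j) = L' i j)
    (hG3 : ∀ j : Fin n, G' (Fin.last n) (Sum.inl j) = 0)
    (hG4 : ∀ j, G' (Fin.last n) (Sum.inr j) = x j) :
    (rowSpan G' : Set (Fin n ⊕ (Fin n ⊕ (Unit ⊕ Unit)) → F)) = hermDual q (rowSpan G') ∧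
    Module.finrank F (rowSpan G') = n + 1 := by
  classical
  haveI : Fact p.Prime := ⟨hp⟩
  -- characteristic
  have hq0 : 0 < q := hq ▸ pow_pos hp.pos m
  have hcard : Fintype.card F = p ^ (2 * m) := by
    rw [hF, hq, ← pow_mul, mul_comm]
  have hchar : CharP F p := by
    obtain ⟨k, hkp, hk⟩ := FiniteField.card F (ringChar F)
    have h1 : (ringChar F) ∣ p ^ (2 * m) := by
      rw [← hcard, hk]; exact dvd_pow_self _ k.pos.ne'
    have hrc : ringChar F = p :=
      (Nat.prime_dvd_prime_iff_eq hkp hp).mp (hkp.dvd_of_dvd_pow h1)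
    exact hrc ▸ ringChar.charP F
  -- Frobenius-type facts
  have hfrob : ∀ u v : F, (u + v) ^ q = u ^ q + v ^ q := by
    intro u v; rw [hq]; exact add_pow_char_pow u v p m
  have hqq : ∀ u : F, (u ^ q) ^ q = u := by
    intro u
    rw [← pow_mul, ← sq, ← hF]
    exact FiniteField.pow_card u
  -- the conjugation ring hom
  let rho : F →+* F :=
    { toFun := (· ^ q), map_one' := one_pow q, map_mul' := fun u v => mul_pow u v q,
      map_zero' := zero_pow hq0.ne', map_add' := hfrob }
  -- the conjugation equivalence on vectors
  let phi : ((Fin n ⊕ (Fin n ⊕ (Unit ⊕ Unit))) → F) ≃ ((Fin n ⊕ (Fin n ⊕ (Unit ⊕ Unit))) → F) :=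
    { toFun := fun y j => (y j) ^ q, invFun := fun y j => (y j) ^ q,
      left_inv := fun y => funext fun j => hqq (y j),
      right_inv := fun y => funext fun j => hqq (y j) }
  have haa : a ^ q * a = -1 := by rw [← pow_succ]; exact ha
  have hLentry : ∀ i j : Fin n, ∑ k, L i k * (L j k) ^ q = if i = j then (1:F) else 0 := by
    intro i j
    have h := congrFun (congrFun hL i) j
    simpa [Matrix.mul_apply, Matrix.one_apply] using h
  have hLL : ∀ i j, hermInner q (L' i) (L' j) = -(if i = j then (1:F) else 0) := by
    intro i j
    have h1 : hermInner q (L' i) (L' j)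
        = (a ^ q * a) * (∑ k, L i k * (L j k) ^ q)
          + ((a ^ q * a) * (lam i * (lam j) ^ q) + lam i * (lam j) ^ q) := by
      simp only [hermInner, hL', Fintype.sum_sum_type, Sum.elim_inl, Sum.elim_inr, mul_pow,
        Finset.mul_sum]
      congr 1
      · exact Finset.sum_congr rfl fun k _ => by ring
      · simp only [Finset.univ_unique, Finset.sum_singleton]
        ring
    rw [h1, haa, hLentry]
    ring
  have hsplit : ∀ u v : (Fin n ⊕ (Fin n ⊕ (Unit ⊕ Unit))) → F, hermInner q u v =
      ∑ k : Fin n, u (Sum.inl k) * (v (Sum.inl k)) ^ q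
      + ∑ k : Fin n ⊕ (Unit ⊕ Unit), u (Sum.inr k) * (v (Sum.inr k)) ^ q := by
    intro u v
    exact Fintype.sum_sum_type _
  have horth : ∀ i j : Fin (n+1), hermInner q (G' i) (G' j) = 0 := by
    intro i j
    induction i using Fin.lastCases with
    | last =>
      induction j using Fin.lastCases with
      | last =>
        rw [hsplit]
        simp only [hG3, hG4, zero_mul, Finset.sum_const_zero, zero_add]
        exact hxx
      | cast j =>
        rw [hsplit]
        simp only [hG3, hG4, hG2, zero_mul, Finset.sum_const_zero, zero_add]
        have h2 : rho (hermInner q (L' j) x) = ∑ k, x k * (L' j k) ^ q := by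
          rw [show hermInner q (L' j) x = ∑ k, L' j k * (x k) ^ q from rfl, map_sum]
          refine Finset.sum_congr rfl fun k _ => ?_
          show (L' j k * (x k) ^ q) ^ q = _
          rw [mul_pow, hqq, mul_comm]
        rw [← h2, hLx j, map_zero]
    | cast i =>
      induction j using Fin.lastCases with
      | last =>
        rw [hsplit]
        simp only [hG1, hG2, hG3, hG4, zero_pow hq0.ne', mul_zero, Finset.sum_const_zero, zero_add]
        exact hLx i
      | cast j =>
        rw [hsplit]
        have h1 : ∑ k : Fin n, G' i.castSucc (Sum.inl k) * (G' j.castSucc (Sum.inl k)) ^ q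
            = if i = j then (1:F) else 0 := by
          simp only [hG1, ite_mul, one_mul, zero_mul, apply_ite (· ^ q), one_pow,
            zero_pow hq0.ne']
          rw [Finset.sum_ite_eq' Finset.univ i]
          simp [eq_comm]
        have h2 : ∑ k : Fin n ⊕ (Unit ⊕ Unit),
            G' i.castSucc (Sum.inr k) * (G' j.castSucc (Sum.inr k)) ^ q
            = hermInner q (L' i) (L' j) := by
          simp [hG2, hermInner]
        rw [h1, h2, hLL]
        ring
  -- linear independence of the rows of G'
  obtain ⟨j0, hj0⟩ : ∃ j0, x j0 ≠ 0 := Function.ne_iff.mp hx0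
  have hind : LinearIndependent F (fun i : Fin (n+1) => G' i) := by
    rw [Fintype.linearIndependent_iff]
    intro g hg
    have hcastz : ∀ j : Fin n, g j.castSucc = 0 := by
      intro j
      have h := congrFun hg (Sum.inl j)
      rw [Finset.sum_apply, Fin.sum_univ_castSucc] at h
      simpa [hG1, hG3, Finset.sum_ite_eq'] using h
    have hlastz : g (Fin.last n) = 0 := by
      have h := congrFun hg (Sum.inr j0)
      rw [Finset.sum_apply, Fin.sum_univ_castSucc] at h
      simp only [Pi.smul_apply, smul_eq_mul, hG2, hG4, hcastz, zero_mul,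
        Finset.sum_const_zero, zero_add, Pi.zero_apply] at h
      exact (mul_eq_zero.mp h).resolve_right hj0
    intro i
    induction i using Fin.lastCases with
    | last => exact hlastz
    | cast i => exact hcastz i
  have hfin : Module.finrank F (rowSpan G') = n + 1 := by
    rw [rowSpan, finrank_span_eq_card hind]
    simp
  have hrank : G'.rank = n + 1 := by
    rw [hind.rank_matrix]
    simp
  have hker : Module.finrank F (LinearMap.ker (Matrix.mulVecLin G')) = n + 1 := by
    have h := LinearMap.finrank_range_add_finrank_ker (Matrix.mulVecLin G')
    rw [Module.finrank_pi] at h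
    have hc : Fintype.card (Fin n ⊕ (Fin n ⊕ (Unit ⊕ Unit))) = 2 * n + 2 := by
      simp; ring
    rw [hc] at h
    have hr : Module.finrank F (LinearMap.range (Matrix.mulVecLin G')) = n + 1 := hrank
    omega
  -- characterization of the dual
  have hdual : hermDual q ↑(rowSpan G')
      = {y : (Fin n ⊕ (Fin n ⊕ (Unit ⊕ Unit))) → F | ∀ i, hermInner q (G' i) y = 0} := by
    ext y
    constructor
    · intro hy i
      exact hy (G' i) (Submodule.subset_span ⟨i, rfl⟩)
    · intro hy v hv
      let f : ((Fin n ⊕ (Fin n ⊕ (Unit ⊕ Unit))) → F) →ₗ[F] F :=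
        { toFun := fun u => ∑ k, u k * (y k) ^ q,
          map_add' := by intro u w; simp [add_mul, Finset.sum_add_distrib],
          map_smul' := by
            intro c u
            simp only [Pi.smul_apply, smul_eq_mul, RingHom.id_apply, Finset.mul_sum]
            exact Finset.sum_congr rfl fun k _ => by ring }
      have hle : rowSpan G' ≤ LinearMap.ker f := by
        rw [rowSpan, Submodule.span_le]
        rintro _ ⟨i, rfl⟩
        simpa [f, hermInner] using hy i
      simpa [f, hermInner] using hle hv
  have hset : {y : (Fin n ⊕ (Fin n ⊕ (Unit ⊕ Unit))) → F | ∀ i, hermInner q (G' i) y = 0}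
      = phi ⁻¹' ↑(LinearMap.ker (Matrix.mulVecLin G')) := by
    ext y
    simp only [Set.mem_setOf_eq, Set.mem_preimage, SetLike.mem_coe, LinearMap.mem_ker,
      Matrix.mulVecLin_apply]
    constructor
    · intro h
      funext i
      simpa [Matrix.mulVec, dotProduct, hermInner, phi] using h i
    · intro h i
      have := congrFun h i
      simpa [Matrix.mulVec, dotProduct, hermInner, phi] using this
  -- the span is contained in its dual
  have hsub : (↑(rowSpan G') : Set ((Fin n ⊕ (Fin n ⊕ (Unit ⊕ Unit))) → F))
      ⊆ hermDual q ↑(rowSpan G') := by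
    rw [hdual]
    let S : Submodule F ((Fin n ⊕ (Fin n ⊕ (Unit ⊕ Unit))) → F) :=
      { carrier := {y | ∀ i, hermInner q (G' i) y = 0},
        zero_mem' := by intro i; simp [hermInner, zero_pow hq0.ne'],
        add_mem' := by
          intro y z hy hz i
          have : hermInner q (G' i) (y + z) = hermInner q (G' i) y + hermInner q (G' i) z := by
            simp only [hermInner, Pi.add_apply, hfrob, mul_add, Finset.sum_add_distrib]
          rw [this, hy i, hz i, add_zero],
        smul_mem' := by
          intro c y hy i
          have : hermInner q (G' i) (c • y) = c ^ q * hermInner q (G' i) y := by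
            simp only [hermInner, Pi.smul_apply, smul_eq_mul, mul_pow, Finset.mul_sum]
            exact Finset.sum_congr rfl fun k _ => by ring
          rw [this, hy i, mul_zero] }
    have hle : rowSpan G' ≤ S := by
      rw [rowSpan, Submodule.span_le]
      rintro _ ⟨i, rfl⟩ j
      exact horth j i
    exact fun y hy => hle hy
  -- cardinality comparison
  have hkcard : Nat.card (LinearMap.ker (Matrix.mulVecLin G')) = Fintype.card F ^ (n + 1) := by
    haveI : Fintype (LinearMap.ker (Matrix.mulVecLin G')) := Fintype.ofFinite _
    have h := Module.card_eq_pow_finrank (K := F) (V := LinearMap.ker (Matrix.mulVecLin G'))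
    rw [Nat.card_eq_fintype_card, h, hker]
  have hccard : Nat.card (rowSpan G') = Fintype.card F ^ (n + 1) := by
    haveI : Fintype (rowSpan G') := Fintype.ofFinite _
    have h := Module.card_eq_pow_finrank (K := F) (V := rowSpan G')
    rw [Nat.card_eq_fintype_card, h, hfin]
  have hncard : (hermDual q (↑(rowSpan G') : Set ((Fin n ⊕ (Fin n ⊕ (Unit ⊕ Unit))) → F))).ncard
      ≤ (↑(rowSpan G') : Set ((Fin n ⊕ (Fin n ⊕ (Unit ⊕ Unit))) → F)).ncard := by
    rw [hdual, hset]
    rw [Set.ncard_preimage_of_injective_subset_range phi.injective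
      (by rw [Equiv.range_eq_univ]; exact Set.subset_univ _)]
    rw [← Nat.card_coe_set_eq, ← Nat.card_coe_set_eq]
    exact le_of_eq (hkcard.trans hccard.symm)
  refine ⟨Set.eq_of_subset_of_ncard_le hsub hncard (Set.toFinite _), hfin⟩
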